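/- For the basis functions χ_i(x) = L_i(x) − L_{i+1}(x), the weighted mass integrals c_{ij} = ∫_{−1}^{1} χ_j(x) χ_i(x) (x+1) dx satisfy c_{ii} = 4(i+1)/((2i+1)(2i+3)), c_{i,i+1} = 4/((2i+1)(2i+3)(2i+5)), c_{i,i+2} = −2(i+2)/((2i+3)(2i+5)), and c_{ij} = 0 for |i − j| ≥ 3. -/

import Mathlib

open Polynomial intervalIntegral

/-- The `n`-th Legendre polynomial via Rodrigues' formula. -/
noncomputable def legendre (n : ℕ) : Polynomial ℝ :=
  Polynomial.C ((2 ^ n * n.factorial : ℝ)⁻¹) * Polynomial.derivative^[n] ((X ^ 2 - 1) ^ n)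

/-- χ_i = L_i − L_{i+1}. -/
noncomputable def chi (i : ℕ) : Polynomial ℝ := legendre i - legendre (i + 1)

/-- c_{ij} = ∫_{-1}^1 χ_j χ_i (x+1) dx. -/
noncomputable def cMat (i j : ℕ) : ℝ :=
  ∫ x in (-1 : ℝ)..1, (chi j).eval x * (chi i).eval x * (x + 1)

lemma C_two : (C (2:ℝ) : Polynomial ℝ) = 2 := map_ofNat C 2

lemma iterD_succ' (k : ℕ) (p : Polynomial ℝ) :
    derivative^[k + 1] p = derivative (derivative^[k] p) :=
  Function.iterate_succ_apply' _ _ _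

lemma iterD_X_mul (p : Polynomial ℝ) (k : ℕ) :
    derivative^[k + 1] (X * p) =
      X * derivative^[k + 1] p + ((k + 1 : ℕ) : Polynomial ℝ) * derivative^[k] p := by
  induction k generalizing p with
  | zero => simp [derivative_mul]; ring
  | succ k ih =>
    rw [iterD_succ' (k+1) (X * p), ih, derivative_add, derivative_mul, derivative_mul,
      derivative_X, derivative_natCast, ← iterD_succ' (k+1) p, ← iterD_succ' k p]
    push_cast
    ring

lemma iterD_sq_mul (p : Polynomial ℝ) (k : ℕ) :
    derivative^[k + 2] ((X ^ 2 - 1) * p) =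
      (X ^ 2 - 1) * derivative^[k + 2] p
        + ((2 * (k + 2) : ℕ) : Polynomial ℝ) * (X * derivative^[k + 1] p)
        + (((k + 2) * (k + 1) : ℕ) : Polynomial ℝ) * derivative^[k] p := by
  induction k generalizing p with
  | zero =>
    show derivative (derivative _) = _
    simp [derivative_mul, derivative_pow, C_two]
    ring
  | succ k ih =>
    rw [iterD_succ' (k+2) ((X^2-1) * p), ih, derivative_add, derivative_add,
      derivative_mul, derivative_mul, derivative_mul, derivative_mul,
      derivative_X, derivative_sub, derivative_X_pow, derivative_one,
      ← iterD_succ' (k+2) p, ← iterD_succ' (k+1) p, ← iterD_succ' k p]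
    simp only [derivative_natCast]
    push_cast [C_two]
    ring

noncomputable def gP (n : ℕ) : Polynomial ℝ := ((X : Polynomial ℝ) ^ 2 - 1) ^ n

/-- M_{m+1} -/
noncomputable def Mp (m : ℕ) : Polynomial ℝ :=
  C ((2 ^ (m+1) * (m+1).factorial : ℝ)⁻¹) * derivative^[m] (gP (m+1))

lemma legendre_eq (n : ℕ) :
    legendre n = C ((2 ^ n * n.factorial : ℝ)⁻¹) * derivative^[n] (gP n) := rfl

lemma legendre_zero : legendre 0 = 1 := by
  simp [legendre]

lemma legendre_one : legendre 1 = X := by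
  simp [legendre, derivative_sub, derivative_one, derivative_X_pow, Nat.factorial]
  rw [one_add_one_eq_two, ← C_two, ← mul_assoc, ← C_mul]
  norm_num

lemma deriv_Mp (m : ℕ) : derivative (Mp m) = legendre (m + 1) := by
  rw [Mp, derivative_C_mul, ← iterD_succ', legendre_eq]

lemma deriv_gP_succ (n : ℕ) :
    derivative (gP (n + 1)) = C ((2 * (n + 1) : ℕ) : ℝ) * (X * gP n) := by
  rw [gP, derivative_pow, derivative_sub, derivative_one, derivative_X_pow, ← gP]
  simp only [C_eq_natCast]
  push_cast
  ring

lemma key_a (m : ℕ) :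
    derivative^[m + 2] (gP (m + 2)) =
      C ((2 * (m + 2) : ℕ) : ℝ) *
        (X * derivative^[m + 1] (gP (m + 1))
          + ((m + 1 : ℕ) : Polynomial ℝ) * derivative^[m] (gP (m + 1))) := by
  rw [show m + 2 = (m + 1) + 1 from rfl, Function.iterate_succ_apply, deriv_gP_succ,
    iterate_derivative_C_mul, iterD_X_mul]

lemma key_b (m : ℕ) :
    derivative^[m + 2] (gP (m + 2)) =
      (X ^ 2 - 1) * derivative^[m + 2] (gP (m + 1))
        + ((2 * (m + 2) : ℕ) : Polynomial ℝ) * (X * derivative^[m + 1] (gP (m + 1)))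
        + (((m + 2) * (m + 1) : ℕ) : Polynomial ℝ) * derivative^[m] (gP (m + 1)) := by
  rw [show gP (m + 2) = (X ^ 2 - 1) * gP (m + 1) by rw [gP, gP, pow_succ]; ring]
  exact iterD_sq_mul (gP (m + 1)) m

lemma ode_raw (m : ℕ) :
    (X ^ 2 - 1) * derivative^[m + 2] (gP (m + 1)) =
      (((m + 2) * (m + 1) : ℕ) : Polynomial ℝ) * derivative^[m] (gP (m + 1)) := by
  have h := (key_a m).symm.trans (key_b m)
  rw [C_eq_natCast] at h
  push_cast at h ⊢
  linear_combination -h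

lemma R1 (m : ℕ) :
    legendre (m + 2) = X * legendre (m + 1) + ((m + 1 : ℕ) : Polynomial ℝ) * Mp m := by
  have hc : ((2:ℝ) ^ (m + 2) * (m + 2).factorial)⁻¹ * ((2 * (m + 2) : ℕ) : ℝ)
      = ((2:ℝ) ^ (m + 1) * (m + 1).factorial)⁻¹ := by
    have h1 : ((m+1).factorial : ℝ) ≠ 0 := Nat.cast_ne_zero.2 (m+1).factorial_ne_zero
    rw [Nat.factorial_succ (m+1)]
    push_cast
    field_simp
    ring
  rw [legendre_eq, key_a, ← mul_assoc, ← C_eq_natCast, ← C_mul, hc, Mp, legendre_eq]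
  ring

lemma R3 (m : ℕ) :
    (X ^ 2 - 1) * derivative (legendre (m + 1)) =
      (((m + 1) * (m + 2) : ℕ) : Polynomial ℝ) * Mp m := by
  have h := ode_raw m
  have : derivative (legendre (m + 1)) =
      C ((2 ^ (m+1) * (m+1).factorial : ℝ)⁻¹) * derivative^[m + 2] (gP (m + 1)) := by
    rw [legendre_eq, derivative_C_mul, ← iterD_succ']
  rw [this, Mp]
  push_cast at h ⊢
  linear_combination (C ((2:ℝ) ^ (m+1) * ((m+1).factorial:ℝ))⁻¹) * h

lemma iterD_gP_eval {n l : ℕ} (h : l < n) {x : ℝ} (hx : x ^ 2 - 1 = 0) :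
    (derivative^[l] (gP n)).eval x = 0 := by
  obtain ⟨q, hq⟩ := pow_sub_dvd_iterate_derivative_pow ((X : Polynomial ℝ) ^ 2 - 1) n l
  rw [gP, hq, eval_mul, eval_pow]
  have hx' : (((X : Polynomial ℝ) ^ 2 - 1)).eval x = 0 := by simpa using hx
  rw [hx', zero_pow (by omega), zero_mul]

lemma Mp_eval_one (m : ℕ) : (Mp m).eval 1 = 0 := by
  rw [Mp, eval_mul, iterD_gP_eval (by omega) (by norm_num), mul_zero]

lemma Mp_eval_neg_one (m : ℕ) : (Mp m).eval (-1) = 0 := by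
  rw [Mp, eval_mul, iterD_gP_eval (by omega) (by norm_num), mul_zero]

lemma legendre_eval_one (n : ℕ) : (legendre n).eval 1 = 1 := by
  have hsplit : gP n = (X - C (1:ℝ)) ^ n * (X + C (1:ℝ)) ^ n := by
    rw [gP, ← mul_pow]; congr 1; simp; ring
  have key : (derivative^[n] (gP n)).eval 1 = n.factorial * 2 ^ n := by
    rw [hsplit, iterate_derivative_mul, eval_finset_sum]
    rw [Finset.sum_eq_single 0]
    · simp only [Nat.sub_zero, Function.iterate_zero, id_eq, Nat.choose_zero_right, one_smul]
      rw [iterate_derivative_X_sub_pow_self]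
      simp [eval_pow]
      norm_num
    · intro k hk hk0
      have hkn : k ≤ n := by simpa [Nat.lt_succ_iff] using hk
      have hne : n - (n - k) ≠ 0 := by omega
      simp only [iterate_derivative_X_sub_pow, nsmul_eq_mul, eval_mul, eval_pow, eval_natCast,
        eval_sub, eval_one, eval_X, eval_C, sub_self, zero_pow hne, mul_zero, zero_mul]
    · intro h; simp at h
  rw [legendre_eq, eval_mul, key, eval_C]
  have h1 : ((n).factorial : ℝ) ≠ 0 := Nat.cast_ne_zero.2 (n).factorial_ne_zero
  field_simp

lemma R5 (n : ℕ) :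
    ((n + 1 : ℕ) : Polynomial ℝ) * legendre (n + 1) =
      ((n + 1 : ℕ) : Polynomial ℝ) * (X * legendre n) + (X ^ 2 - 1) * derivative (legendre n) := by
  cases n with
  | zero => simp [legendre_zero, legendre_one]
  | succ m =>
    have h1 := R1 m
    have h3 := R3 m
    push_cast at h1 h3 ⊢
    linear_combination ((m : Polynomial ℝ) + 2) * h1 - h3

lemma R4 (n : ℕ) :
    derivative (legendre (n + 1)) =
      ((n + 1 : ℕ) : Polynomial ℝ) * legendre n + X * derivative (legendre n) := by
  cases n with
  | zero => simp [legendre_zero, legendre_one]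
  | succ m =>
    have h := congrArg derivative (R1 m)
    rw [derivative_add, derivative_mul, derivative_mul, derivative_X, derivative_natCast,
      deriv_Mp] at h
    have h1 := R1 m
    push_cast at h h1 ⊢
    linear_combination h

lemma R6 (n : ℕ) :
    X * derivative (legendre (n + 1)) - derivative (legendre n) =
      ((n + 1 : ℕ) : Polynomial ℝ) * legendre (n + 1) := by
  have h4 := R4 n
  have h5 := R5 n
  push_cast at h4 h5 ⊢
  linear_combination (X : Polynomial ℝ) * h4 - h5

lemma R7 (m : ℕ) :
    derivative (legendre (m + 2)) - derivative (legendre m) =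
      ((2 * m + 3 : ℕ) : Polynomial ℝ) * legendre (m + 1) := by
  have h4 := R4 (m + 1)
  have h6 := R6 m
  push_cast at h4 h6 ⊢
  linear_combination h4 + h6

lemma bonnetAux (m : ℕ) :
    legendre (m + 2) - legendre m = ((2 * m + 3 : ℕ) : Polynomial ℝ) * Mp m := by
  set q : Polynomial ℝ := legendre (m + 2) - legendre m - ((2 * m + 3 : ℕ) : Polynomial ℝ) * Mp m
    with hqdef
  have hq : derivative q = 0 := by
    rw [hqdef]
    rw [derivative_sub, derivative_sub, derivative_mul, derivative_natCast, deriv_Mp]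
    have h7 := R7 m
    push_cast at h7 ⊢
    linear_combination h7
  have hC : q = C (q.coeff 0) := eq_C_of_derivative_eq_zero hq
  have he : q.eval 1 = 0 := by
    rw [hqdef]
    simp [legendre_eval_one, Mp_eval_one]
  have hc0 : q.coeff 0 = 0 := by rw [hC] at he; simpa using he
  have hq0 : q = 0 := by rw [hC, hc0, map_zero]
  rw [hqdef] at hq0
  linear_combination hq0

lemma bonnet (n : ℕ) :
    ((2 * n + 1 : ℕ) : Polynomial ℝ) * (X * legendre n) =
      ((n + 1 : ℕ) : Polynomial ℝ) * legendre (n + 1) +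
        ((n : ℕ) : Polynomial ℝ) * legendre (n - 1) := by
  cases n with
  | zero => simp [legendre_zero, legendre_one]
  | succ m =>
    have hA := bonnetAux m
    have h1 := R1 m
    push_cast at hA h1 ⊢
    linear_combination ((m : Polynomial ℝ) + 1) * hA - (2 * (m : Polynomial ℝ) + 3) * h1

noncomputable def J (p : Polynomial ℝ) : ℝ := ∫ x in (-1 : ℝ)..1, p.eval x

lemma J_derivative (p : Polynomial ℝ) : J (derivative p) = p.eval 1 - p.eval (-1) := by
  rw [J]
  exact intervalIntegral.integral_eq_sub_of_hasDerivAt (fun x _ => p.hasDerivAt x)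
    ((Polynomial.continuous (derivative p)).intervalIntegrable _ _)

lemma J_add (p q : Polynomial ℝ) : J (p + q) = J p + J q := by
  simp only [J, eval_add]
  exact intervalIntegral.integral_add ((Polynomial.continuous p).intervalIntegrable _ _)
    ((Polynomial.continuous q).intervalIntegrable _ _)

lemma J_sub (p q : Polynomial ℝ) : J (p - q) = J p - J q := by
  simp only [J, eval_sub]
  exact intervalIntegral.integral_sub ((Polynomial.continuous p).intervalIntegrable _ _)
    ((Polynomial.continuous q).intervalIntegrable _ _)

lemma J_C_mul (a : ℝ) (p : Polynomial ℝ) : J (C a * p) = a * J p := by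
  simp only [J, eval_mul, eval_C]
  exact intervalIntegral.integral_const_mul a _

lemma J_natCast_mul (n : ℕ) (p : Polynomial ℝ) : J ((n : Polynomial ℝ) * p) = n * J p := by
  rw [← C_eq_natCast, J_C_mul]

lemma J_zero : J 0 = 0 := by simp [J]

lemma J_ibp (p q : Polynomial ℝ) :
    J (derivative p * q) =
      p.eval 1 * q.eval 1 - p.eval (-1) * q.eval (-1) - J (p * derivative q) := by
  have h := J_derivative (p * q)
  rw [derivative_mul, J_add, eval_mul, eval_mul] at h
  linarith

lemma J_shift (n : ℕ) : ∀ k l (p : Polynomial ℝ), k + l = n →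
    J (derivative^[n] (gP n) * p) =
      (-1 : ℝ) ^ k * J (derivative^[l] (gP n) * derivative^[k] p) := by
  intro k
  induction k with
  | zero =>
    intro l p h
    simp only [zero_add] at h
    subst h
    simp
  | succ k ih =>
    intro l p hkl
    have hln : l < n := by omega
    rw [ih (l + 1) p (by omega), iterD_succ' l (gP n),
      J_ibp (derivative^[l] (gP n)) (derivative^[k] p),
      iterD_gP_eval hln (by norm_num : (1:ℝ) ^ 2 - 1 = 0),
      iterD_gP_eval hln (by norm_num : (-1:ℝ) ^ 2 - 1 = 0), ← iterD_succ' k p]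
    ring

lemma J_legendre_mul (n : ℕ) (p : Polynomial ℝ) :
    J (legendre n * p) =
      (2 ^ n * n.factorial : ℝ)⁻¹ * ((-1) ^ n * J (gP n * derivative^[n] p)) := by
  rw [legendre_eq, mul_assoc, J_C_mul, J_shift n n 0 p (by omega)]
  simp

lemma natDegree_gP (n : ℕ) : (gP n).natDegree = 2 * n := by
  rw [gP, natDegree_pow, show ((X : Polynomial ℝ) ^ 2 - 1) = X ^ 2 - C 1 by rw [C_1],
    natDegree_X_pow_sub_C]
  ring

lemma natDegree_legendre_le (n : ℕ) : (legendre n).natDegree ≤ n := by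
  rw [legendre_eq]
  refine (natDegree_C_mul_le _ _).trans ?_
  refine (natDegree_iterate_derivative _ _).trans ?_
  rw [natDegree_gP]
  omega

lemma ortho_lt {a b : ℕ} (h : a < b) : J (legendre b * legendre a) = 0 := by
  rw [J_legendre_mul, iterate_derivative_eq_zero (lt_of_le_of_lt (natDegree_legendre_le a) h),
    mul_zero, J_zero]
  ring

noncomputable def W (n : ℕ) : ℝ := J (gP n)

lemma gP_eval_zero {n : ℕ} (h : 0 < n) {x : ℝ} (hx : x ^ 2 - 1 = 0) : (gP n).eval x = 0 := by
  simpa using iterD_gP_eval h hx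

lemma W_zero : W 0 = 2 := by
  simp [W, J, gP]
  norm_num

lemma gP_deriv_id (n : ℕ) :
    derivative (X * gP (n + 1)) =
      ((2 * n + 3 : ℕ) : Polynomial ℝ) * gP (n + 1) + ((2 * (n + 1) : ℕ) : Polynomial ℝ) * gP n := by
  rw [derivative_mul, derivative_X, deriv_gP_succ]
  have h : gP (n + 1) = (X ^ 2 - 1) * gP n := by rw [gP, gP, pow_succ]; ring
  rw [C_eq_natCast]
  push_cast
  linear_combination (-2 * (n : Polynomial ℝ) - 2) * h

lemma W_succ (n : ℕ) :
    (2 * (n : ℝ) + 3) * W (n + 1) + (2 * (n : ℝ) + 2) * W n = 0 := by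
  have h := congrArg J (gP_deriv_id n)
  rw [J_derivative, J_add, J_natCast_mul, J_natCast_mul, eval_mul, eval_mul, eval_X, eval_X,
    gP_eval_zero (Nat.succ_pos n) (by norm_num : (1:ℝ) ^ 2 - 1 = 0),
    gP_eval_zero (Nat.succ_pos n) (by norm_num : (-1:ℝ) ^ 2 - 1 = 0)] at h
  push_cast at h
  rw [W, W]
  linarith

lemma W_closed (n : ℕ) :
    W n = (-1) ^ n * 2 ^ (2 * n + 1) * (n.factorial : ℝ) ^ 2 / ((2 * n + 1).factorial : ℝ) := by
  induction n with
  | zero => simpa using W_zero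
  | succ n ih =>
    have h := W_succ n
    rw [ih] at h
    have h3 : (2 * (n : ℝ) + 3) ≠ 0 := by positivity
    have hf1 : ((2 * (n + 1) + 1).factorial : ℝ)
        = (2 * n + 3) * ((2 * n + 2) * ((2 * n + 1).factorial : ℝ)) := by
      rw [show 2 * (n + 1) + 1 = (2 * n + 2) + 1 from by ring, Nat.factorial_succ,
        show 2 * n + 2 = (2 * n + 1) + 1 from rfl, Nat.factorial_succ]
      push_cast
      ring
    have hf2 : (((n + 1).factorial : ℝ)) = (n + 1) * (n.factorial : ℝ) := by
      rw [Nat.factorial_succ]; push_cast; ring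
    have hne1 : ((2 * n + 1).factorial : ℝ) ≠ 0 := Nat.cast_ne_zero.2 (Nat.factorial_ne_zero _)
    have hne2 : ((n).factorial : ℝ) ≠ 0 := Nat.cast_ne_zero.2 (Nat.factorial_ne_zero _)
    have hW : W (n + 1) = -((2 * (n : ℝ) + 2) * W n) / (2 * (n : ℝ) + 3) := by
      have := W_succ n
      field_simp
      linarith
    rw [hW, ih, hf1, hf2]
    push_cast
    field_simp
    ring

lemma coeff_gP_top (n : ℕ) : (gP n).coeff (2 * n) = 1 := by
  have hm : (gP n).Monic := by
    rw [gP, show ((X : Polynomial ℝ) ^ 2 - 1) = X ^ 2 - C 1 by rw [C_1]]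
    exact (monic_X_pow_sub_C (1 : ℝ) two_ne_zero).pow n
  have := hm.coeff_natDegree
  rwa [natDegree_gP] at this

lemma coeff_legendre_self (n : ℕ) :
    (legendre n).coeff n = (2 ^ n * n.factorial : ℝ)⁻¹ * ((2 * n).descFactorial n : ℝ) := by
  rw [legendre_eq, coeff_C_mul, coeff_iterate_derivative,
    show n + n = 2 * n from by ring, coeff_gP_top, nsmul_eq_mul, mul_one]

lemma iterD_of_natDegree_le {p : Polynomial ℝ} {n : ℕ} (h : p.natDegree ≤ n) :
    derivative^[n] p = C ((n.factorial : ℝ) * p.coeff n) := by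
  have hd : (derivative^[n] p).natDegree ≤ 0 := by
    refine (natDegree_iterate_derivative _ _).trans ?_
    omega
  rw [eq_C_of_natDegree_le_zero hd, coeff_iterate_derivative, zero_add, Nat.descFactorial_self,
    nsmul_eq_mul]

lemma norm_legendre (n : ℕ) : J (legendre n * legendre n) = 2 / (2 * (n : ℝ) + 1) := by
  set a : ℝ := (legendre n).coeff n with ha
  have hsplit : legendre n = (legendre n - C a * X ^ n) + C a * X ^ n := by ring
  have h1 : J (legendre n * (legendre n - C a * X ^ n)) = 0 := by
    rw [J_legendre_mul]
    have hdeg : (legendre n - C a * X ^ n).natDegree ≤ n := by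
      refine (natDegree_sub_le _ _).trans (max_le (natDegree_legendre_le n) ?_)
      exact (natDegree_C_mul_le _ _).trans (le_of_eq (natDegree_X_pow n))
    rw [iterD_of_natDegree_le hdeg]
    have hc : (legendre n - C a * X ^ n).coeff n = 0 := by
      rw [coeff_sub, coeff_C_mul, coeff_X_pow]
      simp [ha]
    rw [hc, mul_zero, map_zero, mul_zero, J_zero]
    ring
  have h2 : derivative^[n] (C a * X ^ n) = C (a * (n.factorial : ℝ)) := by
    rw [iterate_derivative_C_mul, iterate_derivative_X_pow_eq_C_mul, Nat.sub_self, pow_zero,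
      Nat.descFactorial_self, mul_one, ← C_mul]
  have key : J (legendre n * legendre n)
      = a * ((2 ^ n * n.factorial : ℝ)⁻¹ * ((-1) ^ n * ((n.factorial : ℝ) * W n))) := by
    conv_lhs => rw [show legendre n * legendre n
      = legendre n * (legendre n - C a * X ^ n) + legendre n * (C a * X ^ n) from by ring]
    rw [J_add, h1, zero_add, J_legendre_mul, h2]
    rw [show gP n * C (a * (n.factorial : ℝ)) = C (a * (n.factorial : ℝ)) * gP n from by ring,
      J_C_mul, ← W]
    ring
  rw [key, W_closed, ha, coeff_legendre_self]
  have hdf : ((2 * n).descFactorial n : ℝ) * (n.factorial : ℝ) = ((2 * n).factorial : ℝ) := by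
    have := Nat.factorial_mul_descFactorial (show n ≤ 2 * n by omega)
    rw [show 2 * n - n = n from by omega] at this
    exact_mod_cast by rw [mul_comm]; exact_mod_cast congrArg (Nat.cast (R := ℝ)) this
  have hf1 : ((2 * n + 1).factorial : ℝ) = (2 * (n : ℝ) + 1) * ((2 * n).factorial : ℝ) := by
    rw [Nat.factorial_succ]; push_cast; ring
  have hne1 : ((2 * n).factorial : ℝ) ≠ 0 := Nat.cast_ne_zero.2 (Nat.factorial_ne_zero _)
  have hne2 : ((n).factorial : ℝ) ≠ 0 := Nat.cast_ne_zero.2 (Nat.factorial_ne_zero _)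
  have hne3 : (2 * (n : ℝ) + 1) ≠ 0 := by positivity
  have hdf' : ((2 * n).descFactorial n : ℝ) = ((2 * n).factorial : ℝ) / (n.factorial : ℝ) := by
    field_simp
    linarith [hdf]
  rw [hdf', hf1]
  have hs : ((-1:ℝ)) ^ n * (-1:ℝ) ^ n = 1 := by rw [← pow_add, ← two_mul, pow_mul]; norm_num
  have hp : ((2:ℝ)) ^ (2 * n + 1) = 2 * (2 ^ n * 2 ^ n) := by
    rw [pow_succ, two_mul, pow_add]; ring
  rw [hp]
  have h2n : ((2:ℝ)) ^ n ≠ 0 := by positivity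
  generalize hg : ((-1:ℝ)) ^ n = s at hs ⊢
  field_simp
  linear_combination hs

noncomputable def Jp (a b : ℕ) : ℝ := J (legendre a * legendre b)

lemma Jp_ne {a b : ℕ} (h : a ≠ b) : Jp a b = 0 := by
  rcases lt_or_gt_of_ne h with h' | h'
  · rw [Jp, mul_comm]; exact ortho_lt h'
  · rw [Jp]; exact ortho_lt h'

lemma Jp_diag (a : ℕ) : Jp a a = 2 / (2 * (a : ℝ) + 1) := norm_legendre a

lemma J4 (p q r s : Polynomial ℝ) : J (p - q - r + s) = J p - J q - J r + J s := by
  rw [J_add, J_sub, J_sub]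

lemma combo (i : ℕ) :
    (((2 * i + 1) * (2 * i + 3) : ℕ) : Polynomial ℝ) * ((X + 1) * chi i) =
      ((i * (2 * i + 3) : ℕ) : Polynomial ℝ) * (legendre (i - 1) - legendre (i + 1))
        + (((i + 2) * (2 * i + 1) : ℕ) : Polynomial ℝ) * (legendre i - legendre (i + 2)) := by
  have b1 := bonnet i
  have b2 := bonnet (i + 1)
  rw [show i + 1 - 1 = i from rfl] at b2
  rw [chi]
  push_cast at b1 b2 ⊢
  linear_combination (2 * (i : Polynomial ℝ) + 3) * b1 - (2 * (i : Polynomial ℝ) + 1) * b2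

lemma cMat_eq (i j : ℕ) : cMat i j = J (chi j * chi i * (X + 1)) := by
  rw [cMat, J]
  refine intervalIntegral.integral_congr fun x _ => ?_
  simp

lemma cMat_symm (i j : ℕ) : cMat i j = cMat j i := by
  rw [cMat, cMat]
  refine intervalIntegral.integral_congr fun x _ => ?_
  ring

lemma main_id (i j : ℕ) :
    (((2 * i + 1) * (2 * i + 3) : ℕ) : ℝ) * cMat i j =
      ((i * (2 * i + 3) : ℕ) : ℝ) *
          (Jp j (i - 1) - Jp (j + 1) (i - 1) - Jp j (i + 1) + Jp (j + 1) (i + 1))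
        + (((i + 2) * (2 * i + 1) : ℕ) : ℝ) *
          (Jp j i - Jp (j + 1) i - Jp j (i + 2) + Jp (j + 1) (i + 2)) := by
  rw [cMat_eq, ← J_natCast_mul]
  have hpoly : ((((2 * i + 1) * (2 * i + 3) : ℕ)) : Polynomial ℝ) * (chi j * chi i * (X + 1)) =
      (((i * (2 * i + 3) : ℕ)) : Polynomial ℝ) *
          (legendre j * legendre (i - 1) - legendre (j + 1) * legendre (i - 1)
            - legendre j * legendre (i + 1) + legendre (j + 1) * legendre (i + 1))
        + ((((i + 2) * (2 * i + 1) : ℕ)) : Polynomial ℝ) *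
          (legendre j * legendre i - legendre (j + 1) * legendre i
            - legendre j * legendre (i + 2) + legendre (j + 1) * legendre (i + 2)) := by
    have hc := combo i
    rw [show chi j = legendre j - legendre (j + 1) from rfl]
    push_cast at hc ⊢
    linear_combination (legendre j - legendre (j + 1)) * hc
  rw [hpoly, J_add, J_natCast_mul, J_natCast_mul, J4, J4]
  simp only [Jp]

lemma q_diag (a : ℕ) : (2 * (a : ℝ) + 1) * Jp a a = 2 := by
  rw [Jp_diag]
  have hd : (2 * (a : ℝ) + 1) ≠ 0 := by positivity
  field_simp

lemma entry_diag (i : ℕ) :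
    cMat i i = 4 * ((i : ℝ) + 1) / ((2 * (i : ℝ) + 1) * (2 * (i : ℝ) + 3)) := by
  have hK : ((2 * (i : ℝ) + 1) * (2 * (i : ℝ) + 3)) ≠ 0 := by positivity
  rw [eq_div_iff hK]
  cases i with
  | zero =>
    have h := main_id 0 0
    have q1 := q_diag 0
    have q2 := q_diag 1
    rw [Jp_ne (show (1:ℕ) ≠ 0 by omega), Jp_ne (show (0:ℕ) ≠ 1 by omega),
      Jp_ne (show (0:ℕ) ≠ 2 by omega), Jp_ne (show (1:ℕ) ≠ 2 by omega)] at h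
    push_cast at h q1 q2 ⊢
    linear_combination h + 2 * q1
  | succ m =>
    have h := main_id (m + 1) (m + 1)
    rw [show m + 1 - 1 = m from rfl, show m + 1 + 1 = m + 2 from rfl,
      show m + 1 + 2 = m + 3 from rfl, show m + 2 + 1 = m + 3 from rfl] at h
    rw [Jp_ne (show m + 1 ≠ m by omega), Jp_ne (show m + 2 ≠ m by omega),
      Jp_ne (show m + 1 ≠ m + 2 by omega), Jp_ne (show m + 2 ≠ m + 1 by omega),
      Jp_ne (show m + 1 ≠ m + 3 by omega), Jp_ne (show m + 2 ≠ m + 3 by omega)] at h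
    have q1 := q_diag (m + 2)
    have q2 := q_diag (m + 1)
    push_cast at h q1 q2 ⊢
    linear_combination h + ((m : ℝ) + 1) * q1 + ((m : ℝ) + 3) * q2

lemma entry_super1 (i : ℕ) :
    cMat i (i + 1) = 4 / ((2 * (i : ℝ) + 1) * (2 * (i : ℝ) + 3) * (2 * (i : ℝ) + 5)) := by
  have hK : ((2 * (i : ℝ) + 1) * (2 * (i : ℝ) + 3) * (2 * (i : ℝ) + 5)) ≠ 0 := by positivity
  rw [eq_div_iff hK]
  have h := main_id i (i + 1)
  rw [show i + 1 + 1 = i + 2 from rfl] at h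
  rw [Jp_ne (show i + 1 ≠ i - 1 by omega), Jp_ne (show i + 2 ≠ i - 1 by omega),
    Jp_ne (show i + 2 ≠ i + 1 by omega), Jp_ne (show i + 1 ≠ i by omega),
    Jp_ne (show i + 2 ≠ i by omega), Jp_ne (show i + 1 ≠ i + 2 by omega)] at h
  have q1 := q_diag (i + 1)
  have q2 := q_diag (i + 2)
  push_cast at h q1 q2 ⊢
  linear_combination (2 * (i:ℝ) + 5) * h - (i:ℝ) * (2 * (i:ℝ) + 5) * q1
    + ((i:ℝ) + 2) * (2 * (i:ℝ) + 1) * q2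

lemma entry_super2 (i : ℕ) :
    cMat i (i + 2) = -(2 * ((i : ℝ) + 2)) / ((2 * (i : ℝ) + 3) * (2 * (i : ℝ) + 5)) := by
  have hK : ((2 * (i : ℝ) + 3) * (2 * (i : ℝ) + 5)) ≠ 0 := by positivity
  rw [eq_div_iff hK]
  have h := main_id i (i + 2)
  rw [show i + 2 + 1 = i + 3 from rfl] at h
  rw [Jp_ne (show i + 2 ≠ i - 1 by omega), Jp_ne (show i + 3 ≠ i - 1 by omega),
    Jp_ne (show i + 2 ≠ i + 1 by omega), Jp_ne (show i + 3 ≠ i + 1 by omega),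
    Jp_ne (show i + 2 ≠ i by omega), Jp_ne (show i + 3 ≠ i by omega),
    Jp_ne (show i + 3 ≠ i + 2 by omega)] at h
  have q2 := q_diag (i + 2)
  push_cast at h q2 ⊢
  have h1 : (2 * (i:ℝ) + 1) ≠ 0 := by positivity
  have hmain : (2 * (i:ℝ) + 1) *
      (cMat i (i + 2) * ((2 * (i:ℝ) + 3) * (2 * (i:ℝ) + 5)) - (-(2 * ((i:ℝ) + 2)))) = 0 := by
    linear_combination (2 * (i:ℝ) + 5) * h - ((i:ℝ) + 2) * (2 * (i:ℝ) + 1) * q2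
  have h2 := (mul_eq_zero.mp hmain).resolve_left h1
  linear_combination h2

lemma cMat_far {i j : ℕ} (h3 : i + 3 ≤ j) : cMat i j = 0 := by
  have h := main_id i j
  rw [Jp_ne (show j ≠ i - 1 by omega), Jp_ne (show j + 1 ≠ i - 1 by omega),
    Jp_ne (show j ≠ i + 1 by omega), Jp_ne (show j + 1 ≠ i + 1 by omega),
    Jp_ne (show j ≠ i by omega), Jp_ne (show j + 1 ≠ i by omega),
    Jp_ne (show j ≠ i + 2 by omega), Jp_ne (show j + 1 ≠ i + 2 by omega)] at h
  push_cast at h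
  norm_num at h
  rcases h with h | h
  · exfalso
    rcases h with h' | h'
    · have : (2 * (i:ℝ) + 1) ≠ 0 := by positivity
      exact this (by linarith)
    · have : (2 * (i:ℝ) + 3) ≠ 0 := by positivity
      exact this (by linarith)
  · exact h

theorem weighted_mass_entries (i j : ℕ) :
    cMat i i = 4 * ((i : ℝ) + 1) / ((2 * (i : ℝ) + 1) * (2 * (i : ℝ) + 3)) ∧
    cMat i (i + 1) = 4 / ((2 * (i : ℝ) + 1) * (2 * (i : ℝ) + 3) * (2 * (i : ℝ) + 5)) ∧
    cMat i (i + 2) = -(2 * ((i : ℝ) + 2)) / ((2 * (i : ℝ) + 3) * (2 * (i : ℝ) + 5)) ∧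
    (3 ≤ |(i : ℤ) - (j : ℤ)| → cMat i j = 0) := by
  refine ⟨entry_diag i, entry_super1 i, entry_super2 i, fun h => ?_⟩
  rcases le_abs.mp h with h' | h'
  · rw [cMat_symm]
    exact cMat_far (by omega)
  · exact cMat_far (by omega)
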